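/- Let f : A → B and g : B → D be injective homomorphisms of finite undirected multigraphs. Define the multigraph C by V_C = (V_D ∖ g_V(V_B)) ∪ g_V(f_V(V_A)) and E_C = { x ∈ E_D | (x ∉ g_E(E_B) or x ∈ g_E(f_E(E_A))) and both endpoints of x (the entries of i_D(x)) lie in V_C }, with incidence map the restriction of i_D; let φ_D : C → D be the inclusion homomorphism and φ_C : A → C the corestriction of g ∘ f. Then the constructed square is final among pullback complements: for all finite undirected multigraphs W and R and homomorphisms p : W → A, q : W → R, r : R → D such that g ∘ (f ∘ p) = r ∘ q and the square with sides (f ∘ p : W → B, q : W → R, g : B → D, r : R → D) is a pullback (i.e., for every W' and homomorphisms p' : W' → B, q' : W' → R with g ∘ p' = r ∘ q' there exists a unique w : W' → W with (f ∘ p) ∘ w = p' and q ∘ w = q'), there exists a unique homomorphism s : R → C with φ_D ∘ s = r and s ∘ q = φ_C ∘ p. -/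

import Mathlib

/-- A finite undirected multigraph: a finite vertex set, a finite edge set, and an
incidence map assigning to each edge its unordered pair of endpoints (loops allowed). -/
structure MG where
  V : Type
  E : Type
  finV : Finite V
  finE : Finite E
  inc : E → Sym2 V

/-- A homomorphism of finite undirected multigraphs: a pair of maps on vertices and edges
compatible with the incidence maps. -/
structure MG.Hom (G H : MG) where
  vmap : G.V → H.V
  emap : G.E → H.E
  comm : ∀ e, H.inc (emap e) = Sym2.map vmap (G.inc e)

/-- A homomorphism is injective if both its components are injective. -/
def MG.Hom.Injective {G H : MG} (φ : G.Hom H) : Prop :=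
  Function.Injective φ.vmap ∧ Function.Injective φ.emap

/-- A homomorphism is surjective if both its components are surjective. -/
def MG.Hom.Surjective {G H : MG} (φ : G.Hom H) : Prop :=
  Function.Surjective φ.vmap ∧ Function.Surjective φ.emap

/-- A homomorphism is an isomorphism if both its components are bijective. -/
def MG.Hom.IsIso {G H : MG} (φ : G.Hom H) : Prop :=
  Function.Bijective φ.vmap ∧ Function.Bijective φ.emap

/-- Composition of homomorphisms of multigraphs. -/
def MG.Hom.comp {G H K : MG} (ψ : H.Hom K) (φ : G.Hom H) : G.Hom K where
  vmap := ψ.vmap ∘ φ.vmap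
  emap := ψ.emap ∘ φ.emap
  comm := by
    intro e
    simp only [Function.comp_apply, ψ.comm, φ.comm, Sym2.map_map]

/-- Any unordered pair all of whose entries satisfy a predicate `p` lifts to an
unordered pair of elements of the subtype of `p`. -/
lemma sym2_restrict_exists {α : Type} {p : α → Prop} (s : Sym2 α) (h : ∀ a ∈ s, p a) :
    ∃ t : Sym2 {a // p a}, Sym2.map Subtype.val t = s := by
  revert h
  induction s using Sym2.ind with
  | _ x y =>
    intro h
    exact ⟨s(⟨x, h x (by simp)⟩, ⟨y, h y (by simp)⟩), by simp⟩

namespace MG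

variable {A B D : MG}

/-- The vertex set `(V_D ∖ g_V(V_B)) ∪ g_V(f_V(V_A))` of the final pullback
complement of `g ∘ f`. -/
def fpcV (f : A.Hom B) (g : B.Hom D) : Set D.V :=
  (Set.range g.vmap)ᶜ ∪ Set.range (g.vmap ∘ f.vmap)

/-- The edge set of the final pullback complement of `g ∘ f`: the edges of `D` that
are not in `g_E(E_B)` unless they are in `g_E(f_E(E_A))`, and both of whose endpoints
lie in the vertex set `fpcV f g`. -/
def fpcE (f : A.Hom B) (g : B.Hom D) : Set D.E :=
  {x | (x ∉ Set.range g.emap ∨ x ∈ Set.range (g.emap ∘ f.emap)) ∧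
    ∀ w ∈ D.inc x, w ∈ fpcV f g}

/-- The final-pullback-complement object `C`: the multigraph with vertex set `fpcV f g`,
edge set `fpcE f g`, and incidence map the restriction of that of `D`. -/
noncomputable def fpc (f : A.Hom B) (g : B.Hom D) : MG where
  V := {v : D.V // v ∈ fpcV f g}
  E := {x : D.E // x ∈ fpcE f g}
  finV := by have := D.finV; exact inferInstance
  finE := by have := D.finE; exact inferInstance
  inc := fun x => (sym2_restrict_exists (D.inc x.val) x.prop.2).choose

lemma fpc_inc_spec (f : A.Hom B) (g : B.Hom D) (x : (fpc f g).E) :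
    Sym2.map Subtype.val ((fpc f g).inc x) = D.inc x.val :=
  (sym2_restrict_exists (D.inc x.val) x.prop.2).choose_spec

/-- The inclusion homomorphism `φ_D : C → D`. -/
noncomputable def fpcToD (f : A.Hom B) (g : B.Hom D) : (fpc f g).Hom D where
  vmap := Subtype.val
  emap := Subtype.val
  comm := fun x => (fpc_inc_spec f g x).symm

lemma fpc_vmem (f : A.Hom B) (g : B.Hom D) (a : A.V) :
    g.vmap (f.vmap a) ∈ fpcV f g :=
  Or.inr ⟨a, rfl⟩

lemma fpc_emem (f : A.Hom B) (g : B.Hom D) (e : A.E) :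
    g.emap (f.emap e) ∈ fpcE f g := by
  constructor
  · exact Or.inr ⟨e, rfl⟩
  · intro w hw
    rw [g.comm, f.comm, Sym2.map_map] at hw
    rcases Sym2.mem_map.mp hw with ⟨a, _, ha⟩
    exact Or.inr ⟨a, ha⟩

/-- The corestriction `φ_C : A → C` of `g ∘ f`. -/
noncomputable def fpcFromA (f : A.Hom B) (g : B.Hom D) : A.Hom (fpc f g) where
  vmap := fun a => ⟨g.vmap (f.vmap a), fpc_vmem f g a⟩
  emap := fun e => ⟨g.emap (f.emap e), fpc_emem f g e⟩
  comm := by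
    intro e
    apply Sym2.map.injective (Subtype.val_injective)
    refine (fpc_inc_spec f g _).trans ?_
    dsimp only
    rw [g.comm, f.comm, Sym2.map_map]
    first
    | exact (Sym2.map_map _ _ _).symm
    | exact Eq.symm Sym2.map_map
    | induction A.inc e using Sym2.ind with
      | _ x y => rfl

end MG

lemma MG.Hom.ext' {G H : MG} {φ ψ : G.Hom H} (hv : φ.vmap = ψ.vmap)
    (he : φ.emap = ψ.emap) : φ = ψ := by
  cases φ; cases ψ; simp_all

/-- The one-vertex, no-edge multigraph. -/
def MG.pt : MG where
  V := Unit
  E := Empty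
  finV := inferInstance
  finE := inferInstance
  inc := fun e => e.elim

/-- The one-edge multigraph on two vertices. -/
def MG.seg : MG where
  V := Bool
  E := Unit
  finV := inferInstance
  finE := inferInstance
  inc := fun _ => s(false, true)

/-- Homomorphism from the point graph picking a vertex. -/
def MG.ptHom (G : MG) (v : G.V) : MG.pt.Hom G where
  vmap := fun _ => v
  emap := fun e => e.elim
  comm := fun e => e.elim

/-- Homomorphism from the segment picking an edge with chosen endpoints. -/
def MG.segHom (G : MG) (e : G.E) (v₁ v₂ : G.V) (h : G.inc e = s(v₁, v₂)) :
    MG.seg.Hom G where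
  vmap := fun b => cond b v₂ v₁
  emap := fun _ => e
  comm := fun _ => by simpa [MG.seg] using h

/-- **Finality of the constructed pullback complement.** For composable injective
homomorphisms `f : A → B`, `g : B → D` of finite undirected multigraphs, the explicitly
constructed square `(φ_C : A → C, φ_D : C → D)` is final among pullback complements:
whenever `p : W → A`, `q : W → R`, `r : R → D` satisfy `g ∘ (f ∘ p) = r ∘ q` and the
square with sides `(f ∘ p, q, g, r)` is a pullback, there is a unique homomorphism
`s : R → C` with `φ_D ∘ s = r` and `s ∘ q = φ_C ∘ p`. -/
theorem mg_fpc_is_final (A B D : MG) (f : A.Hom B) (g : B.Hom D)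
    (hf : f.Injective) (hg : g.Injective)
    (W R : MG) (p : W.Hom A) (q : W.Hom R) (r : R.Hom D)
    (hcomm : g.comp (f.comp p) = r.comp q)
    (hpb : ∀ (W' : MG) (p' : W'.Hom B) (q' : W'.Hom R),
      g.comp p' = r.comp q' →
      ∃! w : W'.Hom W, (f.comp p).comp w = p' ∧ q.comp w = q') :
    ∃! s : R.Hom (MG.fpc f g),
      (MG.fpcToD f g).comp s = r ∧ s.comp q = (MG.fpcFromA f g).comp p := by
  -- every vertex in the image of r lies in the fpc vertex set
  have hv : ∀ v : R.V, r.vmap v ∈ MG.fpcV f g := by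
    intro v
    by_cases h : r.vmap v ∈ Set.range g.vmap
    · obtain ⟨b, hb⟩ := h
      have hcomm' : g.comp (MG.ptHom B b) = r.comp (MG.ptHom R v) := by
        refine MG.Hom.ext' (funext fun _ => hb) (funext fun e => e.elim)
      obtain ⟨w, ⟨hw1, _⟩, _⟩ := hpb MG.pt (MG.ptHom B b) (MG.ptHom R v) hcomm'
      have : f.vmap (p.vmap (w.vmap ())) = b := congrFun (congrArg MG.Hom.vmap hw1) ()
      exact Or.inr ⟨p.vmap (w.vmap ()), by simp [Function.comp, this, hb]⟩
    · exact Or.inl h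
  -- every edge in the image of r lies in the fpc edge set
  have he : ∀ x : R.E, r.emap x ∈ MG.fpcE f g := by
    intro x
    constructor
    · by_cases h : r.emap x ∈ Set.range g.emap
      · right
        obtain ⟨e, hbe⟩ := h
        obtain ⟨⟨b₁, b₂⟩, hb⟩ := Quot.exists_rep (B.inc e)
        obtain ⟨⟨v₁, v₂⟩, hvx⟩ := Quot.exists_rep (R.inc x)
        have hb : B.inc e = s(b₁, b₂) := hb.symm
        have hvx : R.inc x = s(v₁, v₂) := hvx.symm
        have key : s(g.vmap b₁, g.vmap b₂) = s(r.vmap v₁, r.vmap v₂) := by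
          have := g.comm e
          rw [hbe, r.comm, hvx, hb] at this
          simpa using this.symm
        rw [Sym2.eq_iff] at key
        -- choose endpoint labels of x matching those of e
        obtain ⟨u₁, u₂, hux, h1, h2⟩ :
            ∃ u₁ u₂, R.inc x = s(u₁, u₂) ∧ g.vmap b₁ = r.vmap u₁ ∧
              g.vmap b₂ = r.vmap u₂ := by
          rcases key with ⟨h1, h2⟩ | ⟨h1, h2⟩
          · exact ⟨v₁, v₂, hvx, h1, h2⟩
          · exact ⟨v₂, v₁, by rw [hvx, Sym2.eq_swap], h1, h2⟩
        have hcomm' : g.comp (MG.segHom B e b₁ b₂ hb) =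
            r.comp (MG.segHom R x u₁ u₂ hux) := by
          refine MG.Hom.ext' (funext fun i => ?_) (funext fun _ => hbe)
          cases i
          · exact h1
          · exact h2
        obtain ⟨w, ⟨hw1, _⟩, _⟩ :=
          hpb MG.seg (MG.segHom B e b₁ b₂ hb) (MG.segHom R x u₁ u₂ hux) hcomm'
        have : f.emap (p.emap (w.emap ())) = e :=
          congrFun (congrArg MG.Hom.emap hw1) ()
        exact ⟨p.emap (w.emap ()), by simp [Function.comp, this, hbe]⟩
      · exact Or.inl h
    · intro d hd
      rw [r.comm] at hd
      obtain ⟨v, _, rfl⟩ := Sym2.mem_map.mp hd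
      exact hv v
  refine ⟨{ vmap := fun v => ⟨r.vmap v, hv v⟩,
            emap := fun x => ⟨r.emap x, he x⟩,
            comm := ?_ }, ⟨?_, ?_⟩, ?_⟩
  · intro x
    apply Sym2.map.injective Subtype.val_injective
    refine (MG.fpc_inc_spec f g _).trans ?_
    refine (r.comm x).trans ?_
    induction R.inc x using Sym2.ind with
    | _ a b => rfl
  · exact MG.Hom.ext' rfl rfl
  · have hcv := congrArg MG.Hom.vmap hcomm
    have hce := congrArg MG.Hom.emap hcomm
    refine MG.Hom.ext' (funext fun w => Subtype.ext ?_) (funext fun w => Subtype.ext ?_)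
    · exact (congrFun hcv w).symm
    · exact (congrFun hce w).symm
  · rintro s' ⟨hs1, _⟩
    have hv' := congrArg MG.Hom.vmap hs1
    have he' := congrArg MG.Hom.emap hs1
    refine MG.Hom.ext' (funext fun v => Subtype.ext ?_) (funext fun x => Subtype.ext ?_)
    · exact congrFun hv' v
    · exact congrFun he' x
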